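/- Let d ≤ k and let X, X̃ ∈ ℝ^{d×k} both have full rank d, with Gram matrices G = XᵀX and G̃ = X̃ᵀX̃. If ‖G − G̃‖_F ≤ σ_d(X)²/2, then ρ(X, X̃) ≤ √2 · ‖G − G̃‖_F / σ_d(X). -/

import Mathlib

open Matrix

/-- Euclidean norm of a vector. -/
noncomputable def euclNorm {n : ℕ} (v : Fin n → ℝ) : ℝ :=
  Real.sqrt (∑ i, (v i) ^ 2)

/-- Frobenius norm of a matrix. -/
noncomputable def frobNorm {m n : ℕ} (A : Matrix (Fin m) (Fin n) ℝ) : ℝ :=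
  Real.sqrt (∑ i, ∑ j, (A i j) ^ 2)

/-- The smallest (d-th) singular value of `X ∈ ℝ^{d×k}` (for `d ≤ k`),
characterized variationally as `min_{‖u‖=1} ‖Xᵀ u‖`. -/
noncomputable def sigmaMin {d k : ℕ} (X : Matrix (Fin d) (Fin k) ℝ) : ℝ :=
  sInf {r | ∃ u : Fin d → ℝ, euclNorm u = 1 ∧ r = euclNorm (Matrix.vecMul u X)}

/-- The Procrustes distance: `min` over orthogonal `Q` of `‖X − Q X̃‖_F`. -/
noncomputable def rho {d k : ℕ} (X Y : Matrix (Fin d) (Fin k) ℝ) : ℝ :=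
  sInf {r | ∃ Q : Matrix (Fin d) (Fin d) ℝ, Qᵀ * Q = 1 ∧ r = frobNorm (X - Q * Y)}

section AuxLemmas

lemma euclNorm_nonneg {n : ℕ} (v : Fin n → ℝ) : 0 ≤ euclNorm v := Real.sqrt_nonneg _

lemma euclNorm_sq {n : ℕ} (v : Fin n → ℝ) : euclNorm v ^ 2 = v ⬝ᵥ v := by
  rw [euclNorm, Real.sq_sqrt (by positivity)]
  simp [dotProduct, pow_two]

lemma euclNorm_smul {n : ℕ} (c : ℝ) (v : Fin n → ℝ) :
    euclNorm (c • v) = |c| * euclNorm v := by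
  rw [euclNorm, euclNorm]
  have : ∑ i, (c • v) i ^ 2 = c ^ 2 * ∑ i, v i ^ 2 := by
    rw [Finset.mul_sum]
    refine Finset.sum_congr rfl fun i _ => ?_
    simp [mul_pow]
  rw [this, Real.sqrt_mul (by positivity), Real.sqrt_sq_eq_abs]

lemma euclNorm_pos {n : ℕ} {v : Fin n → ℝ} (hv : v ≠ 0) : 0 < euclNorm v := by
  rw [euclNorm, Real.sqrt_pos]
  rcases Function.ne_iff.mp hv with ⟨i, hi⟩
  exact Finset.sum_pos' (fun j _ => by positivity)
    ⟨i, Finset.mem_univ i, by simpa using pow_pos (abs_pos.mpr hi) 2⟩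

lemma euclNorm_continuous {n : ℕ} : Continuous (fun v : Fin n → ℝ => euclNorm v) := by
  apply Real.continuous_sqrt.comp
  exact continuous_finset_sum _ (fun i _ => (continuous_apply i).pow 2)

lemma frobNorm_nonneg {m n : ℕ} (A : Matrix (Fin m) (Fin n) ℝ) : 0 ≤ frobNorm A :=
  Real.sqrt_nonneg _

lemma frobNorm_sq {m n : ℕ} (A : Matrix (Fin m) (Fin n) ℝ) :
    frobNorm A ^ 2 = trace (Aᵀ * A) := by
  rw [frobNorm, Real.sq_sqrt (by positivity)]
  rw [trace]
  simp [Matrix.mul_apply, pow_two, diag]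
  exact Finset.sum_comm

lemma frobNorm_transpose {m n : ℕ} (A : Matrix (Fin m) (Fin n) ℝ) :
    frobNorm Aᵀ = frobNorm A := by
  rw [frobNorm, frobNorm, Finset.sum_comm]
  rfl

lemma trace_transpose_mul_self_nonneg {m n : ℕ} (A : Matrix (Fin m) (Fin n) ℝ) :
    0 ≤ trace (Aᵀ * A) := by
  rw [← frobNorm_sq]; positivity

lemma dot_self_nonneg {n : ℕ} (v : Fin n → ℝ) : 0 ≤ v ⬝ᵥ v := by
  simpa [dotProduct, pow_two] using
    Finset.sum_nonneg (fun i (_ : i ∈ Finset.univ) => mul_self_nonneg (v i))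

lemma dot_sq_le (n : ℕ) (v w : Fin n → ℝ) : (v ⬝ᵥ w)^2 ≤ (v ⬝ᵥ v) * (w ⬝ᵥ w) := by
  have := Finset.sum_mul_sq_le_sq_mul_sq Finset.univ v w
  simpa [dotProduct, pow_two] using this

lemma mulVec_dot_self_le {n : ℕ} (A : Matrix (Fin n) (Fin n) ℝ) (v : Fin n → ℝ) :
    (A *ᵥ v) ⬝ᵥ (A *ᵥ v) ≤ (∑ i, ∑ j, (A i j)^2) * (v ⬝ᵥ v) := by
  have h : ∀ i, (A *ᵥ v) i ^ 2 ≤ (∑ j, (A i j)^2) * (v ⬝ᵥ v) := by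
    intro i
    have := Finset.sum_mul_sq_le_sq_mul_sq Finset.univ (A i) v
    simpa [Matrix.mulVec, dotProduct, pow_two] using this
  calc (A *ᵥ v) ⬝ᵥ (A *ᵥ v) = ∑ i, (A *ᵥ v) i ^2 := by simp [dotProduct, pow_two]
    _ ≤ ∑ i, (∑ j, (A i j)^2) * (v ⬝ᵥ v) := Finset.sum_le_sum (fun i _ => h i)
    _ = (∑ i, ∑ j, (A i j)^2) * (v ⬝ᵥ v) := by rw [Finset.sum_mul]

lemma quad_le_frob {n : ℕ} (A : Matrix (Fin n) (Fin n) ℝ) (v : Fin n → ℝ) :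
    v ⬝ᵥ (A *ᵥ v) ≤ frobNorm A * (v ⬝ᵥ v) := by
  have hF : 0 ≤ frobNorm A := frobNorm_nonneg A
  have hFsq : frobNorm A ^ 2 = ∑ i, ∑ j, (A i j)^2 := Real.sq_sqrt (by positivity)
  have h1 := dot_sq_le n v (A *ᵥ v)
  have h2 := mulVec_dot_self_le A v
  have hvv := dot_self_nonneg v
  have key : (v ⬝ᵥ (A *ᵥ v))^2 ≤ (frobNorm A * (v ⬝ᵥ v))^2 := by
    rw [mul_pow, hFsq]
    calc (v ⬝ᵥ (A *ᵥ v))^2 ≤ (v ⬝ᵥ v) * ((A *ᵥ v) ⬝ᵥ (A *ᵥ v)) := h1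
      _ ≤ (v ⬝ᵥ v) * ((∑ i, ∑ j, (A i j)^2) * (v ⬝ᵥ v)) :=
          mul_le_mul_of_nonneg_left h2 hvv
      _ = (∑ i, ∑ j, (A i j)^2) * (v ⬝ᵥ v)^2 := by ring
  calc v ⬝ᵥ (A *ᵥ v) ≤ |v ⬝ᵥ (A *ᵥ v)| := le_abs_self _
    _ ≤ |frobNorm A * (v ⬝ᵥ v)| := by
        have := Real.sqrt_le_sqrt key
        rwa [Real.sqrt_sq_eq_abs, Real.sqrt_sq_eq_abs] at this
    _ = frobNorm A * (v ⬝ᵥ v) := abs_of_nonneg (by positivity)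

lemma trace_conj_nonneg {d k : ℕ} (P : Matrix (Fin d) (Fin d) ℝ)
    (hP : ∀ z, 0 ≤ z ⬝ᵥ (P *ᵥ z)) (E : Matrix (Fin k) (Fin d) ℝ) :
    0 ≤ Matrix.trace (E * P * Eᵀ) := by
  rw [Matrix.trace]
  refine Finset.sum_nonneg (fun i _ => ?_)
  have : (E * P * Eᵀ).diag i = (E i) ⬝ᵥ (P *ᵥ (E i)) := by
    simp [Matrix.diag, Matrix.mul_apply, dotProduct, Matrix.mulVec, Finset.sum_mul,
      Finset.mul_sum, Matrix.transpose_apply]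
    rw [Finset.sum_comm]
    refine Finset.sum_congr rfl fun l _ => Finset.sum_congr rfl fun j _ => by ring
  rw [this]; exact hP (E i)

lemma rank_surj {d k : ℕ} (X : Matrix (Fin d) (Fin k) ℝ) (hX : X.rank = d) :
    Function.Surjective (X.mulVec) := by
  have h : LinearMap.range X.mulVecLin = ⊤ := by
    apply Submodule.eq_top_of_finrank_eq
    rw [← Matrix.rank, hX, Module.finrank_pi]
    simp
  intro y
  have := LinearMap.range_eq_top.mp h y
  simpa using this

lemma vecMul_ne_zero {d k : ℕ} (X : Matrix (Fin d) (Fin k) ℝ) (hX : X.rank = d)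
    {u : Fin d → ℝ} (hu : u ≠ 0) : Matrix.vecMul u X ≠ 0 := by
  intro h0
  apply hu
  obtain ⟨w, hw⟩ := rank_surj X hX u
  have : Matrix.vecMul u X ⬝ᵥ w = u ⬝ᵥ u := by
    rw [← Matrix.dotProduct_mulVec, hw]
  rw [h0] at this
  simp [dotProduct] at this
  exact (dotProduct_self_eq_zero).mp this.symm

lemma vecMul_continuous {d k : ℕ} (X : Matrix (Fin d) (Fin k) ℝ) :
    Continuous (fun u : Fin d → ℝ => Matrix.vecMul u X) := by
  apply continuous_pi
  intro j
  have : (fun u : Fin d → ℝ => Matrix.vecMul u X j) = fun u => ∑ i, u i * X i j := by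
    funext u; simp [Matrix.vecMul, dotProduct]
  rw [this]
  exact continuous_finset_sum _ (fun i _ => ((continuous_apply i).mul continuous_const))

lemma sphere_compact {d : ℕ} : IsCompact {u : Fin d → ℝ | euclNorm u = 1} := by
  rw [Metric.isCompact_iff_isClosed_bounded]
  constructor
  · exact isClosed_eq euclNorm_continuous continuous_const
  · apply Metric.isBounded_iff_subset_closedBall (0 : Fin d → ℝ) |>.mpr
    refine ⟨1, fun u hu => ?_⟩
    simp only [Set.mem_setOf_eq] at hu
    have hsum : ∑ i, (u i)^2 = 1 := by
      have := congrArg (fun x => x ^ 2) hu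
      simpa [euclNorm, Real.sq_sqrt (Finset.sum_nonneg fun i _ => sq_nonneg (u i))] using this
    simp only [Metric.mem_closedBall]
    rw [dist_zero_right]
    rw [pi_norm_le_iff_of_nonneg (by norm_num)]
    intro i
    rw [Real.norm_eq_abs, abs_le_one_iff_mul_self_le_one]
    have h1 : (u i)^2 ≤ 1 := by
      have : ∑ j, (u j)^2 ≥ (u i)^2 :=
        Finset.single_le_sum (f := fun j => (u j)^2) (fun j _ => sq_nonneg _) (Finset.mem_univ i)
      linarith
    nlinarith [h1]

lemma sigma_bddBelow {d k : ℕ} (X : Matrix (Fin d) (Fin k) ℝ) :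
    BddBelow {r | ∃ u : Fin d → ℝ, euclNorm u = 1 ∧ r = euclNorm (Matrix.vecMul u X)} :=
  ⟨0, fun r ⟨u, _, hr⟩ => hr ▸ euclNorm_nonneg _⟩

lemma sigma_le {d k : ℕ} (X : Matrix (Fin d) (Fin k) ℝ) {u : Fin d → ℝ}
    (hu : euclNorm u = 1) : sigmaMin X ≤ euclNorm (Matrix.vecMul u X) :=
  csInf_le (sigma_bddBelow X) ⟨u, hu, rfl⟩

lemma sigma_pos {d k : ℕ} (hd : 0 < d) (X : Matrix (Fin d) (Fin k) ℝ)
    (hsurj : ∀ u : Fin d → ℝ, u ≠ 0 → Matrix.vecMul u X ≠ 0) : 0 < sigmaMin X := by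
  haveI : NeZero d := ⟨hd.ne'⟩
  have hne : ({u : Fin d → ℝ | euclNorm u = 1}).Nonempty := by
    refine ⟨(Pi.single 0 (1:ℝ) : Fin d → ℝ), ?_⟩
    have h1 : ∑ i, (Pi.single (0 : Fin d) (1:ℝ)) i ^ 2 = (1:ℝ) := by
      rw [Finset.sum_eq_single 0]
      · simp
      · intro b _ hb; simp [Pi.single_apply, hb]
      · simp
    simp only [Set.mem_setOf_eq, euclNorm, h1, Real.sqrt_one]
  obtain ⟨u₀, hu₀, hmin⟩ := sphere_compact.exists_isMinOn hne
    ((euclNorm_continuous.comp (vecMul_continuous X)).continuousOn)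
  have hu₀1 : euclNorm u₀ = 1 := hu₀
  have hu₀ne : u₀ ≠ 0 := by
    intro h; rw [h] at hu₀1; simp [euclNorm] at hu₀1
  have hpos : 0 < euclNorm (Matrix.vecMul u₀ X) := euclNorm_pos (hsurj u₀ hu₀ne)
  have : euclNorm (Matrix.vecMul u₀ X) ≤ sigmaMin X := by
    have hset : ({r | ∃ u : Fin d → ℝ, euclNorm u = 1 ∧
        r = euclNorm (Matrix.vecMul u X)} : Set ℝ).Nonempty :=
      ⟨euclNorm (Matrix.vecMul u₀ X), u₀, hu₀1, rfl⟩
    rw [sigmaMin]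
    apply le_csInf hset
    rintro r ⟨u, hu, rfl⟩
    exact hmin hu
  linarith

lemma sigma_all {d k : ℕ} (X : Matrix (Fin d) (Fin k) ℝ) (hσ : 0 ≤ sigmaMin X)
    (z : Fin d → ℝ) :
    sigmaMin X ^ 2 * (z ⬝ᵥ z) ≤ (Matrix.vecMul z X) ⬝ᵥ (Matrix.vecMul z X) := by
  rcases eq_or_ne z 0 with rfl | hz
  · simpa [dotProduct] using Finset.sum_nonneg
      fun i (_ : i ∈ Finset.univ) => mul_self_nonneg (Matrix.vecMul (0 : Fin d → ℝ) X i)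
  · have hzn : 0 < euclNorm z := euclNorm_pos hz
    have hu1 : euclNorm ((euclNorm z)⁻¹ • z) = 1 := by
      rw [euclNorm_smul, abs_of_pos (by positivity)]
      field_simp
    have h1 := sigma_le X hu1
    have hvm : Matrix.vecMul ((euclNorm z)⁻¹ • z) X = (euclNorm z)⁻¹ • Matrix.vecMul z X := by
      ext j
      simp [Matrix.vecMul, dotProduct, Finset.mul_sum, smul_eq_mul, mul_assoc]
    rw [hvm, euclNorm_smul, abs_of_pos (by positivity)] at h1
    have h3 : sigmaMin X * euclNorm z ≤ euclNorm (Matrix.vecMul z X) := by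
      rw [← mul_le_mul_iff_right₀ (show (0:ℝ) < (euclNorm z)⁻¹ by positivity)]
      calc (euclNorm z)⁻¹ * (sigmaMin X * euclNorm z) = sigmaMin X := by field_simp
        _ ≤ (euclNorm z)⁻¹ * euclNorm (Matrix.vecMul z X) := h1
    have h4 : (sigmaMin X * euclNorm z)^2 ≤ (euclNorm (Matrix.vecMul z X))^2 :=
      pow_le_pow_left₀ (by positivity) h3 2
    calc sigmaMin X ^2 * (z ⬝ᵥ z) = (sigmaMin X * euclNorm z)^2 := by
          rw [mul_pow, euclNorm_sq]
      _ ≤ (euclNorm (Matrix.vecMul z X))^2 := h4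
      _ = _ := euclNorm_sq _

lemma exists_sqrt {d : ℕ} (M : Matrix (Fin d) (Fin d) ℝ) (b : ℝ) (hb : 0 ≤ b)
    (hM : ∀ z, b * (z ⬝ᵥ z) ≤ (M *ᵥ z) ⬝ᵥ (M *ᵥ z)) :
    ∃ S Sinv : Matrix (Fin d) (Fin d) ℝ, Sᵀ = S ∧ Sinvᵀ = Sinv ∧ S * S = Mᵀ * M ∧
      (∀ z, Real.sqrt b * (z ⬝ᵥ z) ≤ z ⬝ᵥ (S *ᵥ z)) ∧
      (0 < b → S * Sinv = 1 ∧ Sinv * S = 1) := by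
  have hN : (Mᵀ * M).IsHermitian := by
    unfold Matrix.IsHermitian
    rw [show (Mᵀ * M)ᴴ = (Mᵀ * M)ᵀ from rfl, Matrix.transpose_mul, Matrix.transpose_transpose]
  set N := Mᵀ * M with hNdef
  set lam := hN.eigenvalues with hlam
  set W : Matrix (Fin d) (Fin d) ℝ := (hN.eigenvectorUnitary : Matrix (Fin d) (Fin d) ℝ) with hWdef
  have hWW : Wᵀ * W = 1 := by
    have := hN.eigenvectorUnitary.2
    rw [Matrix.mem_unitaryGroup_iff'] at this
    exact this
  have hWWT : W * Wᵀ = 1 := by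
    have := hN.eigenvectorUnitary.2
    rw [Matrix.mem_unitaryGroup_iff] at this
    exact this
  have hspec : N = W * diagonal lam * Wᵀ := by
    have := hN.spectral_theorem
    simpa [Matrix.star_eq_conjTranspose, Matrix.conjTranspose_eq_transpose_of_trivial] using this
  have hlamb : ∀ i, b ≤ lam i := by
    intro i
    set w : Fin d → ℝ := ⇑(hN.eigenvectorBasis i) with hw
    have hmv : N *ᵥ w = lam i • w := hN.mulVec_eigenvectorBasis i
    have hw1 : w ⬝ᵥ w = 1 := by
      have h : ‖hN.eigenvectorBasis i‖ = 1 := hN.eigenvectorBasis.orthonormal.1 i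
      rw [EuclideanSpace.norm_eq] at h
      have h2 : ∑ j, ‖hN.eigenvectorBasis i j‖ ^ 2 = 1 := by
        have := Real.sqrt_eq_one.mp h
        linarith
      simpa [dotProduct, Real.norm_eq_abs, sq_abs, pow_two] using h2
    have key : w ⬝ᵥ (N *ᵥ w) = (M *ᵥ w) ⬝ᵥ (M *ᵥ w) := by
      rw [hNdef, ← Matrix.mulVec_mulVec, Matrix.dotProduct_mulVec, Matrix.vecMul_transpose]
    have heq : w ⬝ᵥ (N *ᵥ w) = lam i := by
      rw [hmv, dotProduct_smul, hw1]; simp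
    have hineq := hM w
    rw [hw1] at hineq
    rw [key, heq] at *
    linarith [hM w, hw1 ▸ hM w]
  have hsq : ∀ i, Real.sqrt (lam i) * Real.sqrt (lam i) = lam i :=
    fun i => Real.mul_self_sqrt (le_trans hb (hlamb i))
  refine ⟨W * diagonal (fun i => Real.sqrt (lam i)) * Wᵀ,
          W * diagonal (fun i => (Real.sqrt (lam i))⁻¹) * Wᵀ, ?_, ?_, ?_, ?_, ?_⟩
  · rw [Matrix.transpose_mul, Matrix.transpose_mul, Matrix.transpose_transpose,
      Matrix.diagonal_transpose, Matrix.mul_assoc]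
  · rw [Matrix.transpose_mul, Matrix.transpose_mul, Matrix.transpose_transpose,
      Matrix.diagonal_transpose, Matrix.mul_assoc]
  · calc (W * diagonal (fun i => Real.sqrt (lam i)) * Wᵀ) *
        (W * diagonal (fun i => Real.sqrt (lam i)) * Wᵀ)
        = W * diagonal (fun i => Real.sqrt (lam i)) * (Wᵀ * W) *
          diagonal (fun i => Real.sqrt (lam i)) * Wᵀ := by
          simp only [Matrix.mul_assoc]
      _ = W * (diagonal (fun i => Real.sqrt (lam i)) *
          diagonal (fun i => Real.sqrt (lam i))) * Wᵀ := by
          rw [hWW]; simp only [Matrix.mul_assoc, Matrix.mul_one, Matrix.one_mul]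
      _ = W * diagonal lam * Wᵀ := by
          rw [Matrix.diagonal_mul_diagonal]
          have he : (fun i => Real.sqrt (lam i) * Real.sqrt (lam i)) = lam := funext hsq
          rw [he]
      _ = N := hspec.symm
  · intro z
    set y := Wᵀ *ᵥ z with hy
    have h1 : z ⬝ᵥ ((W * diagonal (fun i => Real.sqrt (lam i)) * Wᵀ) *ᵥ z)
        = y ⬝ᵥ (diagonal (fun i => Real.sqrt (lam i)) *ᵥ y) := by
      rw [Matrix.mul_assoc, ← Matrix.mulVec_mulVec, Matrix.dotProduct_mulVec,
        ← Matrix.mulVec_transpose, ← Matrix.mulVec_mulVec]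
    have h2 : y ⬝ᵥ y = z ⬝ᵥ z := by
      rw [hy]
      nth_rewrite 1 [Matrix.mulVec_transpose]
      rw [← Matrix.dotProduct_mulVec, Matrix.mulVec_mulVec, hWWT, Matrix.one_mulVec]
    have h3 : y ⬝ᵥ (diagonal (fun i => Real.sqrt (lam i)) *ᵥ y)
        = ∑ i, Real.sqrt (lam i) * (y i * y i) := by
      simp [dotProduct, Matrix.mulVec_diagonal]
      exact Finset.sum_congr rfl fun i _ => by ring
    have h4 : Real.sqrt b * (y ⬝ᵥ y) ≤ ∑ i, Real.sqrt (lam i) * (y i * y i) := by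
      rw [dotProduct, Finset.mul_sum]
      refine Finset.sum_le_sum fun i _ => ?_
      exact mul_le_mul_of_nonneg_right (Real.sqrt_le_sqrt (hlamb i)) (mul_self_nonneg _)
    rw [h1, h3, ← h2]
    exact h4
  · intro hbpos
    have hne : ∀ i, Real.sqrt (lam i) ≠ 0 := by
      intro i
      have : 0 < lam i := lt_of_lt_of_le hbpos (hlamb i)
      positivity
    constructor
    · calc (W * diagonal (fun i => Real.sqrt (lam i)) * Wᵀ) *
          (W * diagonal (fun i => (Real.sqrt (lam i))⁻¹) * Wᵀ)
          = W * diagonal (fun i => Real.sqrt (lam i)) * (Wᵀ * W) *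
            diagonal (fun i => (Real.sqrt (lam i))⁻¹) * Wᵀ := by
            simp only [Matrix.mul_assoc]
        _ = W * (diagonal (fun i => Real.sqrt (lam i)) *
            diagonal (fun i => (Real.sqrt (lam i))⁻¹)) * Wᵀ := by
            rw [hWW]; simp only [Matrix.mul_assoc, Matrix.mul_one, Matrix.one_mul]
        _ = 1 := by
            rw [Matrix.diagonal_mul_diagonal]
            have he : (fun i => Real.sqrt (lam i) * (Real.sqrt (lam i))⁻¹) = fun _ => (1:ℝ) := by
              funext i; exact mul_inv_cancel₀ (hne i)
            rw [he, Matrix.diagonal_one, Matrix.mul_one, hWWT]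
    · calc (W * diagonal (fun i => (Real.sqrt (lam i))⁻¹) * Wᵀ) *
          (W * diagonal (fun i => Real.sqrt (lam i)) * Wᵀ)
          = W * diagonal (fun i => (Real.sqrt (lam i))⁻¹) * (Wᵀ * W) *
            diagonal (fun i => Real.sqrt (lam i)) * Wᵀ := by
            simp only [Matrix.mul_assoc]
        _ = W * (diagonal (fun i => (Real.sqrt (lam i))⁻¹) *
            diagonal (fun i => Real.sqrt (lam i))) * Wᵀ := by
            rw [hWW]; simp only [Matrix.mul_assoc, Matrix.mul_one, Matrix.one_mul]
        _ = 1 := by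
            rw [Matrix.diagonal_mul_diagonal]
            have he : (fun i => (Real.sqrt (lam i))⁻¹ * Real.sqrt (lam i)) = fun _ => (1:ℝ) := by
              funext i; exact inv_mul_cancel₀ (hne i)
            rw [he, Matrix.diagonal_one, Matrix.mul_one, hWWT]

lemma trace_four {d k : ℕ} (P Q R T : Matrix (Fin k) (Fin d) ℝ) :
    trace ((P * Qᵀ) * (R * Tᵀ)) = trace ((Tᵀ * P) * (Qᵀ * R)) := by
  rw [show (P * Qᵀ) * (R * Tᵀ) = P * (Qᵀ * R) * Tᵀ by simp only [Matrix.mul_assoc],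
    Matrix.trace_mul_cycle]

lemma trace_identity {d k : ℕ} (U V : Matrix (Fin k) (Fin d) ℝ)
    (S : Matrix (Fin d) (Fin d) ℝ) (hUV : Uᵀ * V = S) (hVU : Vᵀ * U = S) :
    trace ((U * Uᵀ - V * Vᵀ)ᵀ * (U * Uᵀ - V * Vᵀ)) =
      trace ((Uᵀ * U - S)ᵀ * (Uᵀ * U - S)) + trace ((Vᵀ * V - S)ᵀ * (Vᵀ * V - S))
        + 2 * trace (S * ((U - V)ᵀ * (U - V))) := by
  have hSsym : Sᵀ = S := by
    calc Sᵀ = (Uᵀ * V)ᵀ := by rw [hUV]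
      _ = Vᵀ * U := by rw [Matrix.transpose_mul, Matrix.transpose_transpose]
      _ = S := hVU
  have hAsym : (Uᵀ * U)ᵀ = Uᵀ * U := by
    rw [Matrix.transpose_mul, Matrix.transpose_transpose]
  have hBsym : (Vᵀ * V)ᵀ = Vᵀ * V := by
    rw [Matrix.transpose_mul, Matrix.transpose_transpose]
  have hΔsym : (U * Uᵀ - V * Vᵀ)ᵀ = U * Uᵀ - V * Vᵀ := by
    rw [Matrix.transpose_sub, Matrix.transpose_mul, Matrix.transpose_transpose,
      Matrix.transpose_mul, Matrix.transpose_transpose]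
  have hTA : (Uᵀ * U - S)ᵀ = Uᵀ * U - S := by rw [Matrix.transpose_sub, hAsym, hSsym]
  have hTB : (Vᵀ * V - S)ᵀ = Vᵀ * V - S := by rw [Matrix.transpose_sub, hBsym, hSsym]
  rw [hΔsym, hTA, hTB]
  have hE : (U - V)ᵀ * (U - V) = Uᵀ * U + Vᵀ * V - S - S := by
    rw [Matrix.transpose_sub, Matrix.sub_mul, Matrix.mul_sub, Matrix.mul_sub, hUV, hVU]
    abel
  rw [hE]
  simp only [Matrix.sub_mul, Matrix.mul_sub, Matrix.mul_add, Matrix.add_mul,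
    Matrix.trace_sub, Matrix.trace_add]
  have e1 : trace ((U * Uᵀ) * (U * Uᵀ)) = trace ((Uᵀ * U) * (Uᵀ * U)) := trace_four U U U U
  have e2 : trace ((U * Uᵀ) * (V * Vᵀ)) = trace S ^ 0 * trace (S * S) := by
    have := trace_four U U V V
    rw [hUV, hVU] at this
    simpa using this
  have e3 : trace ((V * Vᵀ) * (U * Uᵀ)) = trace (S * S) := by
    have := trace_four V V U U
    rw [hUV, hVU] at this
    simpa [Matrix.trace_mul_comm S] using this
  have e4 : trace ((V * Vᵀ) * (V * Vᵀ)) = trace ((Vᵀ * V) * (Vᵀ * V)) := trace_four V V V V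
  have e5 : trace ((Uᵀ * U) * S) = trace (S * (Uᵀ * U)) := Matrix.trace_mul_comm _ _
  have e6 : trace ((Vᵀ * V) * S) = trace (S * (Vᵀ * V)) := Matrix.trace_mul_comm _ _
  simp only [pow_zero, one_mul] at e2
  linarith [e1, e2, e3, e4, e5, e6]

end AuxLemmas



lemma numeric_final (σ c b e F : ℝ) (hσpos : 0 < σ) (hc0 : 0 ≤ c) (hcc : c * c = b)
    (hbge : σ^4/2 ≤ b) (he0 : 0 ≤ e) (hkey : 2 * (c * e) ≤ F^2) :
    e * σ^2 ≤ 2*F^2 := by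
  have h2c : σ^2 ≤ 2*c := by nlinarith [hcc, hbge, pow_pos hσpos 2, hc0]
  have h1 : 0 ≤ (2*c - σ^2) * e := mul_nonneg (by linarith) he0
  nlinarith [hkey, sq_nonneg F]

theorem stmt6 {d k : ℕ} (hdk : d ≤ k)
    (X Xt : Matrix (Fin d) (Fin k) ℝ)
    (hX : X.rank = d) (hXt : Xt.rank = d)
    (hclose : frobNorm (Xᵀ * X - Xtᵀ * Xt) ≤ sigmaMin X ^ 2 / 2) :
    rho X Xt ≤ Real.sqrt 2 * frobNorm (Xᵀ * X - Xtᵀ * Xt) / sigmaMin X := by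
  rcases Nat.eq_zero_or_pos d with hd0 | hd
  · subst hd0
    have hset : {r | ∃ u : Fin 0 → ℝ, euclNorm u = 1 ∧ r = euclNorm (Matrix.vecMul u X)}
        = (∅ : Set ℝ) := by
      ext r
      simp only [Set.mem_setOf_eq, Set.mem_empty_iff_false, iff_false, not_exists]
      intro u
      rintro ⟨hu, -⟩
      simp [euclNorm] at hu
    have hσ0 : sigmaMin X = 0 := by rw [sigmaMin, hset, Real.sInf_empty]
    have hrho : rho X Xt ≤ 0 := by
      have hmem : (0:ℝ) ∈ {r | ∃ Q : Matrix (Fin 0) (Fin 0) ℝ,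
          Qᵀ * Q = 1 ∧ r = frobNorm (X - Q * Xt)} :=
        ⟨1, by simp, by simp [frobNorm]⟩
      exact csInf_le ⟨0, fun r ⟨Q, _, hr⟩ => hr ▸ frobNorm_nonneg _⟩ hmem
    rw [hσ0, div_zero]
    exact hrho
  · set σ := sigmaMin X with hσdef
    have hσpos : 0 < σ := sigma_pos hd X (fun u hu => vecMul_ne_zero X hX hu)
    set Δ := Xᵀ * X - Xtᵀ * Xt with hΔdef
    set F := frobNorm Δ with hFdef
    have hF0 : 0 ≤ F := frobNorm_nonneg _
    have hU : ∀ z : Fin d → ℝ, σ^2 * (z ⬝ᵥ z) ≤ (Xᵀ *ᵥ z) ⬝ᵥ (Xᵀ *ᵥ z) := by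
      intro z
      rw [Matrix.mulVec_transpose]
      exact sigma_all X hσpos.le z
    have hquad : ∀ v, v ⬝ᵥ (Δ *ᵥ v) ≤ F * (v ⬝ᵥ v) := fun v => quad_le_frob Δ v
    have hsplit : ∀ v : Fin k → ℝ,
        v ⬝ᵥ (Δ *ᵥ v) = (X *ᵥ v) ⬝ᵥ (X *ᵥ v) - (Xt *ᵥ v) ⬝ᵥ (Xt *ᵥ v) := by
      intro v
      rw [hΔdef, Matrix.sub_mulVec, dotProduct_sub]
      congr 1
      · rw [← Matrix.mulVec_mulVec, Matrix.dotProduct_mulVec, Matrix.vecMul_transpose]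
      · rw [← Matrix.mulVec_mulVec, Matrix.dotProduct_mulVec, Matrix.vecMul_transpose]
    have hUU : ∀ z : Fin d → ℝ,
        σ^2 * ((Xᵀ *ᵥ z) ⬝ᵥ (Xᵀ *ᵥ z)) ≤ (X *ᵥ (Xᵀ *ᵥ z)) ⬝ᵥ (X *ᵥ (Xᵀ *ᵥ z)) := by
      intro z
      have hs : (Xᵀ *ᵥ z) ⬝ᵥ (Xᵀ *ᵥ z) = z ⬝ᵥ (X *ᵥ (Xᵀ *ᵥ z)) := by
        nth_rewrite 1 [Matrix.dotProduct_mulVec, Matrix.vecMul_transpose]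
        exact dotProduct_comm _ _
      have hCS := dot_sq_le d z (X *ᵥ (Xᵀ *ᵥ z))
      have h1 := hU z
      have hzz := dot_self_nonneg z
      have hww := dot_self_nonneg (X *ᵥ (Xᵀ *ᵥ z))
      have hsnn : 0 ≤ (Xᵀ *ᵥ z) ⬝ᵥ (Xᵀ *ᵥ z) := dot_self_nonneg _
      rcases eq_or_lt_of_le hzz with h0 | hpos
      · have hz0 : z = 0 := dotProduct_self_eq_zero.mp h0.symm
        subst hz0
        simp [Matrix.mulVec_zero]
      · rw [hs] at hsnn h1 ⊢
        nlinarith [mul_le_mul_of_nonneg_right h1 hsnn, hCS, hww, hpos]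
    set M := Xt * Xᵀ with hMdef
    have hσF : σ^2/2 ≤ σ^2 - F := by
      have := hclose
      linarith
    have hMlow : ∀ z, (σ^2 * (σ^2 - F)) * (z ⬝ᵥ z) ≤ (M *ᵥ z) ⬝ᵥ (M *ᵥ z) := by
      intro z
      have e1 : M *ᵥ z = Xt *ᵥ (Xᵀ *ᵥ z) := by rw [hMdef, ← Matrix.mulVec_mulVec]
      rw [e1]
      have hXtq : (Xt *ᵥ (Xᵀ *ᵥ z)) ⬝ᵥ (Xt *ᵥ (Xᵀ *ᵥ z))
          = (X *ᵥ (Xᵀ *ᵥ z)) ⬝ᵥ (X *ᵥ (Xᵀ *ᵥ z)) - (Xᵀ *ᵥ z) ⬝ᵥ (Δ *ᵥ (Xᵀ *ᵥ z)) := by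
        rw [hsplit (Xᵀ *ᵥ z)]; ring
      rw [hXtq]
      have h2 := hquad (Xᵀ *ᵥ z)
      have h3 := hUU z
      have h4 := hU z
      have hvv := dot_self_nonneg (Xᵀ *ᵥ z)
      have hσF0 : 0 ≤ σ^2 - F := le_trans (by positivity) hσF
      nlinarith [mul_le_mul_of_nonneg_left h4 hσF0, h2, h3]
    set b := σ^2 * (σ^2 - F) with hbdef
    have hbge : σ^4/2 ≤ b := by
      rw [hbdef]
      nlinarith [hσF, sq_nonneg σ, hσpos]
    have hbpos : 0 < b := by nlinarith [hbge, pow_pos hσpos 4]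
    have hb0 : 0 ≤ b := hbpos.le
    obtain ⟨S, Sinv, hSsym, hSinvsym, hS2, hSquad, hSinvh⟩ := exists_sqrt M b hb0 hMlow
    obtain ⟨hSS1, hSS2⟩ := hSinvh hbpos
    set R := M * Sinv with hRdef
    have hRT : Rᵀ = Sinv * Mᵀ := by rw [hRdef, Matrix.transpose_mul, hSinvsym]
    have hRTR : Rᵀ * R = 1 := by
      rw [hRT, hRdef]
      calc Sinv * Mᵀ * (M * Sinv) = Sinv * (Mᵀ * M) * Sinv := by
            simp only [Matrix.mul_assoc]
        _ = Sinv * (S * S) * Sinv := by rw [← hS2]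
        _ = (Sinv * S) * (S * Sinv) := by simp only [Matrix.mul_assoc]
        _ = 1 := by rw [hSS2, hSS1, Matrix.one_mul]
    have hRRT : R * Rᵀ = 1 := mul_eq_one_comm.mp hRTR
    set V := Xtᵀ * R with hVdef
    have hRTM : Rᵀ * M = S := by
      rw [hRT, Matrix.mul_assoc, ← hS2, ← Matrix.mul_assoc, hSS2, Matrix.one_mul]
    have hVU : Vᵀ * Xᵀ = S := by
      rw [hVdef, Matrix.transpose_mul, Matrix.transpose_transpose,
        Matrix.mul_assoc, ← hMdef, hRTM]
    have hUV : Xᵀᵀ * V = S := by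
      have := congrArg Matrix.transpose hVU
      rwa [Matrix.transpose_mul, Matrix.transpose_transpose, hSsym] at this
    have hΔeq : Δ = Xᵀ * Xᵀᵀ - V * Vᵀ := by
      rw [hΔdef, Matrix.transpose_transpose]
      congr 1
      rw [hVdef, Matrix.transpose_mul, Matrix.transpose_transpose]
      calc Xtᵀ * Xt = Xtᵀ * (R * Rᵀ) * Xt := by rw [hRRT, Matrix.mul_one]
        _ = Xtᵀ * R * (Rᵀ * Xt) := by simp only [Matrix.mul_assoc]
    have hid : F^2 = trace ((Xᵀᵀ * Xᵀ - S)ᵀ * (Xᵀᵀ * Xᵀ - S))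
        + trace ((Vᵀ * V - S)ᵀ * (Vᵀ * V - S))
        + 2 * trace (S * ((Xᵀ - V)ᵀ * (Xᵀ - V))) := by
      rw [hFdef, frobNorm_sq, hΔeq]
      exact trace_identity Xᵀ V S hUV hVU
    set e := trace ((Xᵀ - V)ᵀ * (Xᵀ - V)) with hedef
    have he0 : 0 ≤ e := trace_transpose_mul_self_nonneg _
    have ht1 : 0 ≤ trace ((Xᵀᵀ * Xᵀ - S)ᵀ * (Xᵀᵀ * Xᵀ - S)) :=
      trace_transpose_mul_self_nonneg _
    have ht2 : 0 ≤ trace ((Vᵀ * V - S)ᵀ * (Vᵀ * V - S)) :=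
      trace_transpose_mul_self_nonneg _
    set c := Real.sqrt b with hcdef
    have hc0 : 0 ≤ c := Real.sqrt_nonneg b
    have hcc : c * c = b := Real.mul_self_sqrt hb0
    have hStr : c * e ≤ trace (S * ((Xᵀ - V)ᵀ * (Xᵀ - V))) := by
      have hPq : ∀ z, 0 ≤ z ⬝ᵥ ((S - c • (1 : Matrix (Fin d) (Fin d) ℝ)) *ᵥ z) := by
        intro z
        rw [Matrix.sub_mulVec, dotProduct_sub]
        have h1 := hSquad z
        have h2 : z ⬝ᵥ ((c • (1 : Matrix (Fin d) (Fin d) ℝ)) *ᵥ z) = c * (z ⬝ᵥ z) := by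
          rw [Matrix.smul_mulVec, Matrix.one_mulVec, dotProduct_smul, smul_eq_mul]
        rw [h2]
        linarith
      have hconj := trace_conj_nonneg _ hPq (Xᵀ - V)
      have hrel : trace ((Xᵀ - V) * (S - c • (1 : Matrix (Fin d) (Fin d) ℝ)) * (Xᵀ - V)ᵀ)
          = trace (S * ((Xᵀ - V)ᵀ * (Xᵀ - V))) - c * e := by
        rw [Matrix.mul_sub, Matrix.sub_mul, Matrix.trace_sub]
        congr 1
        · rw [Matrix.trace_mul_cycle, Matrix.trace_mul_comm]
        · rw [Matrix.mul_smul, Matrix.mul_one, Matrix.smul_mul, Matrix.trace_smul,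
            smul_eq_mul, hedef, Matrix.trace_mul_comm]
      linarith
    have hkey : 2 * (c * e) ≤ F^2 := by
      rw [hid]
      linarith
    -- the candidate orthogonal matrix
    have hQorth : (Rᵀ)ᵀ * Rᵀ = 1 := by rw [Matrix.transpose_transpose]; exact hRRT
    have hE' : (Xᵀ - V)ᵀ = X - Rᵀ * Xt := by
      rw [Matrix.transpose_sub, Matrix.transpose_transpose, hVdef, Matrix.transpose_mul,
        Matrix.transpose_transpose]
    have hfrobE : frobNorm (X - Rᵀ * Xt) = Real.sqrt e := by
      rw [← hE', frobNorm_transpose]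
      rw [hedef, ← frobNorm_sq, Real.sqrt_sq (frobNorm_nonneg _)]
    have hrho_le : rho X Xt ≤ Real.sqrt e := by
      rw [rho]
      refine le_trans (csInf_le ⟨0, ?_⟩ ⟨Rᵀ, hQorth, rfl⟩) ?_
      · rintro r ⟨Q, _, hr⟩
        exact hr ▸ frobNorm_nonneg _
      · exact le_of_eq hfrobE
    have he2 : e * σ^2 ≤ 2*F^2 := numeric_final σ c b e F hσpos hc0 hcc hbge he0 hkey
    have hfin : Real.sqrt e ≤ Real.sqrt 2 * F / σ := by
      have hle : e ≤ (Real.sqrt 2 * F / σ)^2 := by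
        rw [div_pow, mul_pow, Real.sq_sqrt (by norm_num : (0:ℝ) ≤ 2)]
        rw [le_div_iff₀ (by positivity)]
        linarith [he2]
      calc Real.sqrt e ≤ Real.sqrt ((Real.sqrt 2 * F / σ)^2) := Real.sqrt_le_sqrt hle
        _ = |Real.sqrt 2 * F / σ| := Real.sqrt_sq_eq_abs _
        _ = Real.sqrt 2 * F / σ := abs_of_nonneg (by positivity)
    exact hrho_le.trans hfin
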